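/- Let q be a prime power and A, A₀ ∈ GL₂(F_q) with determinants λ = det(A) and λ₀ = det(A₀), and let σ(A,A₀) ∈ M₂(F_q) be the σ-product of A and A₀. Then: (i) det(σ(A,A₀)) = λ·λ₀², so σ(A,A₀) ∈ GL₂(F_q); (ii) for every integer r ≥ 0, the polynomial A₀∘F_{A,r} divides F_{σ(A,A₀),r}; (iii) if f ∈ F_q[x] is a monic irreducible polynomial of degree at least 3 such that [A]∘f = [A₀]∘f = f, then σ(A,A₀) = ε·λ₀·A for some ε ∈ {1,−1}. -/

import Mathlib

open Polynomial

noncomputable section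

namespace PGLAct

variable {F : Type} [Field F]

/-- The composition `A ∘ f = ∑ aᵢ (a x + c)^i (b x + d)^{k-i}` for `A = [[a,b],[c,d]]`. -/
def mcirc (A : Matrix (Fin 2) (Fin 2) F) (f : F[X]) : F[X] :=
  ∑ i ∈ Finset.range (f.natDegree + 1),
    C (f.coeff i) * (C (A 0 0) * X + C (A 1 0)) ^ i *
      (C (A 0 1) * X + C (A 1 1)) ^ (f.natDegree - i)

/-- The composition `[A] ∘ f`: the monic normalization of `A ∘ f`. -/
def pcirc (A : Matrix (Fin 2) (Fin 2) F) (f : F[X]) : F[X] :=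
  C (mcirc A f).leadingCoeff⁻¹ * mcirc A f

/-- The subgroup of scalar matrices in `GL₂(F)`. -/
def scalarSub (F : Type) [Field F] : Subgroup (GL (Fin 2) F) :=
  (Units.map ((Matrix.scalar (Fin 2)).toMonoidHom : F →* Matrix (Fin 2) (Fin 2) F)).range

instance scalarSub_normal (F : Type) [Field F] : (scalarSub F).Normal := by
  constructor
  intro n hn g
  obtain ⟨u, hu⟩ := hn
  refine ⟨u, ?_⟩
  ext : 1
  have hcomm : Commute ((Matrix.scalar (Fin 2)) (u : F)) (g : Matrix (Fin 2) (Fin 2) F) :=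
    Matrix.scalar_commute _ (fun r' => Commute.all _ r') _
  have hval : (n : Matrix (Fin 2) (Fin 2) F) = (Matrix.scalar (Fin 2)) (u : F) := by
    rw [← hu]; rfl
  calc ((Units.map ((Matrix.scalar (Fin 2)).toMonoidHom : F →* Matrix (Fin 2) (Fin 2) F)) u :
        GL (Fin 2) F).val
      = (Matrix.scalar (Fin 2)) (u : F) := rfl
    _ = (g : Matrix (Fin 2) (Fin 2) F) * (Matrix.scalar (Fin 2)) (u : F)
        * ((g⁻¹ : GL (Fin 2) F) : Matrix (Fin 2) (Fin 2) F) := by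
        rw [← hcomm.eq, mul_assoc, ← Units.val_mul, mul_inv_cancel]
        simp
    _ = ((g * n * g⁻¹ : GL (Fin 2) F) : Matrix (Fin 2) (Fin 2) F) := by
        simp [Units.val_mul, hval]

/-- `PGL₂(F)`, the projective general linear group. -/
def PGL2 (F : Type) [Field F] : Type := GL (Fin 2) F ⧸ scalarSub F

instance : Group (PGL2 F) := inferInstanceAs (Group (GL (Fin 2) F ⧸ scalarSub F))

/-- The natural projection `GL₂(F) → PGL₂(F)`, `A ↦ [A]`. -/
def toPGL (F : Type) [Field F] : GL (Fin 2) F →* PGL2 F := QuotientGroup.mk' (scalarSub F)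

/-- The polynomial `F_{A,r} = b x^{q^r+1} - a x^{q^r} + d x - c`. -/
def FAr [Fintype F] (A : Matrix (Fin 2) (Fin 2) F) (r : ℕ) : F[X] :=
  C (A 0 1) * X ^ (Fintype.card F ^ r + 1) - C (A 0 0) * X ^ (Fintype.card F ^ r)
    + C (A 1 1) * X - C (A 1 0)


/-- The σ-product of `A = [[a,b],[c,d]]` and `A₀ = [[a₀,b₀],[c₀,d₀]]`. -/
def sigmaProd (A A0 : Matrix (Fin 2) (Fin 2) F) : Matrix (Fin 2) (Fin 2) F :=
  !![-(A 0 1 * (A0 0 0 * A0 1 0) - A 0 0 * (A0 0 0 * A0 1 1) + A 1 1 * (A0 1 0 * A0 0 1)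
        - A 1 0 * (A0 0 1 * A0 1 1)),
     A 0 1 * A0 0 0 ^ 2 - A 0 0 * (A0 0 0 * A0 0 1) + A 1 1 * (A0 0 0 * A0 0 1)
        - A 1 0 * A0 0 1 ^ 2;
     -(A 0 1 * A0 1 0 ^ 2 - A 0 0 * (A0 1 0 * A0 1 1) + A 1 1 * (A0 1 1 * A0 1 0)
        - A 1 0 * A0 1 1 ^ 2),
     A 0 1 * (A0 0 0 * A0 1 0) - A 0 0 * (A0 1 0 * A0 0 1) + A 1 1 * (A0 1 1 * A0 0 0)
        - A 1 0 * (A0 0 1 * A0 1 1)]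

end PGLAct
namespace SigmaAux
open PGLAct
variable {F : Type} [Field F]

/-- Generalized `mcirc` sum with an arbitrary upper degree bound `N`. -/
def T (A0 : Matrix (Fin 2) (Fin 2) F) (N : ℕ) (f : F[X]) : F[X] :=
  ∑ i ∈ Finset.range (N + 1),
    C (f.coeff i) * (C (A0 0 0) * X + C (A0 1 0)) ^ i *
      (C (A0 0 1) * X + C (A0 1 1)) ^ (N - i)

lemma T_natDegree (A0 : Matrix (Fin 2) (Fin 2) F) (f : F[X]) :
    T A0 f.natDegree f = mcirc A0 f := rfl

lemma T_succ (A0 : Matrix (Fin 2) (Fin 2) F) {f : F[X]} {N : ℕ} (h : f.natDegree ≤ N) :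
    T A0 (N + 1) f = (C (A0 0 1) * X + C (A0 1 1)) * T A0 N f := by
  unfold T
  rw [Finset.sum_range_succ, coeff_eq_zero_of_natDegree_lt (by omega)]
  rw [Finset.mul_sum]
  simp only [C_0, zero_mul, add_zero]
  apply Finset.sum_congr rfl
  intro i hi
  have hi' : i ≤ N := by simpa [Nat.lt_succ_iff] using hi
  have : N + 1 - i = (N - i) + 1 := by omega
  rw [this, pow_succ]
  ring

lemma T_ge (A0 : Matrix (Fin 2) (Fin 2) F) {f : F[X]} {N : ℕ} (h : f.natDegree ≤ N) :
    T A0 N f = (C (A0 0 1) * X + C (A0 1 1)) ^ (N - f.natDegree) * mcirc A0 f := by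
  induction N, h using Nat.le_induction with
  | base => simp [T_natDegree]
  | succ N hN ih =>
      rw [T_succ A0 hN, ih]
      have : N + 1 - f.natDegree = (N - f.natDegree) + 1 := by omega
      rw [this, pow_succ]
      ring

lemma T_add (A0 : Matrix (Fin 2) (Fin 2) F) (N : ℕ) (f g : F[X]) :
    T A0 N (f + g) = T A0 N f + T A0 N g := by
  unfold T
  rw [← Finset.sum_add_distrib]
  apply Finset.sum_congr rfl
  intro i _
  rw [coeff_add, C_add]
  ring

lemma T_monomial (A0 : Matrix (Fin 2) (Fin 2) F) {N j : ℕ} (h : j ≤ N) (e : F) :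
    T A0 N (C e * X ^ j) =
      C e * (C (A0 0 0) * X + C (A0 1 0)) ^ j * (C (A0 0 1) * X + C (A0 1 1)) ^ (N - j) := by
  unfold T
  rw [Finset.sum_eq_single j]
  · simp [coeff_C_mul, coeff_X_pow]
  · intro b _ hbj
    rw [coeff_C_mul, coeff_X_pow, if_neg hbj]
    simp
  · intro h'
    exact absurd (Finset.mem_range.mpr (by omega)) h'

lemma frob_lin [Fintype F] (u v : F) (r : ℕ) :
    (C u * X + C v : F[X]) ^ (Fintype.card F ^ r) =
      C u * X ^ (Fintype.card F ^ r) + C v := by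
  set p := ringChar F with hpdef
  haveI hpF : CharP F p := ringChar.charP F
  haveI hp : Fact p.Prime := ⟨CharP.char_is_prime F p⟩
  haveI : CharP F[X] p := Polynomial.instCharP p
  obtain ⟨n, -, hn⟩ := FiniteField.card F p
  have hm : Fintype.card F ^ r = p ^ ((n : ℕ) * r) := by
    rw [hn, ← pow_mul]
  have hu : ∀ w : F, w ^ (p ^ ((n : ℕ) * r)) = w := by
    intro w
    rw [← hm]
    exact FiniteField.pow_card_pow _ _
  rw [hm, add_pow_char_pow, mul_pow, ← C_pow, ← C_pow, hu u, hu v]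

lemma natDegree_FAr_le [Fintype F] (A : Matrix (Fin 2) (Fin 2) F) (r : ℕ) :
    (FAr A r).natDegree ≤ Fintype.card F ^ r + 1 := by
  have hQ : 1 ≤ Fintype.card F ^ r := Nat.one_le_pow _ _ Fintype.card_pos
  have h1 : (C (A 0 1) * X ^ (Fintype.card F ^ r + 1)).natDegree ≤ Fintype.card F ^ r + 1 :=
    le_trans (natDegree_C_mul_le _ _) (by rw [natDegree_X_pow])
  have h2 : (C (A 0 0) * X ^ (Fintype.card F ^ r)).natDegree ≤ Fintype.card F ^ r + 1 :=
    le_trans (natDegree_C_mul_le _ _) (by rw [natDegree_X_pow]; omega)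
  have h3 : (C (A 1 1) * X).natDegree ≤ Fintype.card F ^ r + 1 :=
    le_trans (natDegree_C_mul_le _ _) (by rw [natDegree_X]; omega)
  have h4 : (C (A 1 0) : F[X]).natDegree ≤ Fintype.card F ^ r + 1 := by
    simp
  unfold FAr
  exact le_trans (natDegree_sub_le _ _) (max_le (le_trans (natDegree_add_le _ _)
    (max_le (le_trans (natDegree_sub_le _ _) (max_le h1 h2)) h3)) h4)

lemma T_FAr [Fintype F] (A A0 : Matrix (Fin 2) (Fin 2) F) (r : ℕ) :
    T A0 (Fintype.card F ^ r + 1) (FAr A r) = FAr (sigmaProd A A0) r := by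
  have hQ : 1 ≤ Fintype.card F ^ r := Nat.one_le_pow _ _ Fintype.card_pos
  set Q := Fintype.card F ^ r with hQdef
  have hdecomp : FAr A r = C (A 0 1) * X ^ (Q + 1) + C (-(A 0 0)) * X ^ Q
      + C (A 1 1) * X ^ 1 + C (-(A 1 0)) * X ^ 0 := by
    unfold FAr
    rw [map_neg, map_neg]
    ring
  rw [hdecomp, T_add, T_add, T_add, T_monomial A0 (le_refl _), T_monomial A0 (by omega),
    T_monomial A0 (by omega), T_monomial A0 (by omega)]
  have h1 : Q + 1 - (Q + 1) = 0 := by omega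
  have h2 : Q + 1 - Q = 1 := by omega
  have h3 : Q + 1 - 1 = Q := by omega
  have h0 : Q + 1 - 0 = Q + 1 := by omega
  rw [h1, h2, h3, h0, pow_succ (C (A0 0 0) * X + C (A0 1 0)) Q,
    pow_succ (C (A0 0 1) * X + C (A0 1 1)) Q, frob_lin, frob_lin]
  unfold FAr sigmaProd
  simp only [Matrix.cons_val', Matrix.cons_val_zero, Matrix.cons_val_one, Matrix.head_cons,
    Matrix.empty_val', Matrix.cons_val_fin_one, Matrix.head_fin_const, Matrix.of_apply,
    map_neg, map_sub, map_add, map_mul, map_pow]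
  ring

lemma mcirc_dvd_FAr_sigma [Fintype F] (A A0 : Matrix (Fin 2) (Fin 2) F) (r : ℕ) :
    mcirc A0 (FAr A r) ∣ FAr (sigmaProd A A0) r := by
  refine ⟨(C (A0 0 1) * X + C (A0 1 1)) ^ (Fintype.card F ^ r + 1 - (FAr A r).natDegree), ?_⟩
  rw [← T_FAr A A0 r, T_ge A0 (natDegree_FAr_le A r)]
  ring

end SigmaAux
namespace SigmaAux
open PGLAct
variable {F : Type} [Field F]

lemma aeval_root' (f : F[X]) : aeval (AdjoinRoot.root f) f = 0 := by
  rw [aeval_def, AdjoinRoot.algebraMap_eq]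
  exact AdjoinRoot.eval₂_root f

lemma quad_vanish {K : Type} [Field K] [Algebra F K] {f : F[X]} {x : K}
    (hirr : Irreducible f) (hmon : f.Monic) (hdeg : 3 ≤ f.natDegree)
    (hx : aeval x f = 0) (u v w : F)
    (h : algebraMap F K u * x ^ 2 + algebraMap F K v * x + algebraMap F K w = 0) :
    u = 0 ∧ v = 0 ∧ w = 0 := by
  have hmin : minpoly F x = f := (minpoly.eq_of_irreducible_of_monic hirr hx hmon).symm
  set g : F[X] := C u * X ^ 2 + C v * X + C w with hgdef
  have hg : aeval x g = 0 := by
    rw [hgdef]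
    simp only [map_add, map_mul, map_pow, aeval_C, aeval_X]
    exact h
  have hdvd : f ∣ g := hmin ▸ minpoly.dvd F x hg
  have hg0 : g = 0 := by
    by_contra hne
    have hle := Polynomial.natDegree_le_of_dvd hdvd hne
    have hgd : g.natDegree ≤ 2 := by
      rw [hgdef]
      refine le_trans (natDegree_add_le _ _) (max_le (le_trans (natDegree_add_le _ _)
        (max_le ?_ ?_)) ?_)
      · exact le_trans (natDegree_C_mul_le _ _) (by rw [natDegree_X_pow])
      · exact le_trans (natDegree_C_mul_le _ _) (by rw [natDegree_X]; omega)
      · simp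
    omega
  refine ⟨?_, ?_, ?_⟩
  · have := congrArg (fun p => Polynomial.coeff p 2) hg0
    simpa [hgdef, coeff_X, coeff_one] using this
  · have := congrArg (fun p => Polynomial.coeff p 1) hg0
    simpa [hgdef, coeff_X_pow] using this
  · have := congrArg (fun p => Polynomial.coeff p 0) hg0
    simpa [hgdef, coeff_X_pow] using this

lemma lin_vanish {K : Type} [Field K] [Algebra F K] {f : F[X]} {x : K}
    (hirr : Irreducible f) (hmon : f.Monic) (hdeg : 3 ≤ f.natDegree)
    (hx : aeval x f = 0) (u v : F)
    (h : algebraMap F K u * x + algebraMap F K v = 0) : u = 0 ∧ v = 0 := by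
  have := quad_vanish hirr hmon hdeg hx 0 u v (by simpa using h)
  exact ⟨this.2.1, this.2.2⟩

lemma aeval_mcirc (K : Type) [Field K] [Algebra F K]
    (M : Matrix (Fin 2) (Fin 2) F) (f : F[X]) (x : K)
    (hs : algebraMap F K (M 0 1) * x + algebraMap F K (M 1 1) ≠ 0) :
    aeval x (mcirc M f) =
      (algebraMap F K (M 0 1) * x + algebraMap F K (M 1 1)) ^ f.natDegree *
        aeval ((algebraMap F K (M 0 0) * x + algebraMap F K (M 1 0)) /
               (algebraMap F K (M 0 1) * x + algebraMap F K (M 1 1))) f := by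
  set s : K := algebraMap F K (M 0 1) * x + algebraMap F K (M 1 1) with hsdef
  set t : K := algebraMap F K (M 0 0) * x + algebraMap F K (M 1 0) with htdef
  rw [mcirc, map_sum, aeval_eq_sum_range, Finset.mul_sum]
  apply Finset.sum_congr rfl
  intro i hi
  have hik : i ≤ f.natDegree := by
    rw [Finset.mem_range] at hi; omega
  simp only [map_mul, map_pow, map_add, aeval_C, aeval_X, ← hsdef, ← htdef]
  rw [Algebra.smul_def, div_pow]
  have hss : s ^ f.natDegree = s ^ (f.natDegree - i) * s ^ i := by
    rw [← pow_add]
    congr 1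
    omega
  rw [hss]
  have hsi : (s : K) ^ i ≠ 0 := pow_ne_zero _ hs
  field_simp


lemma algHom_comm [Fintype F] (f : F[X]) [Fact (Irreducible f)]
    (hmon : f.Monic) (hdeg : 3 ≤ f.natDegree)
    (φ ψ : AdjoinRoot f →ₐ[F] AdjoinRoot f) (x : AdjoinRoot f) :
    φ (ψ x) = ψ (φ x) := by
  classical
  set K := AdjoinRoot f with hKdef
  set k := f.natDegree with hkdef
  have hf0 : f ≠ 0 := hmon.ne_zero
  -- finiteness of K
  let pb : PowerBasis F K := AdjoinRoot.powerBasis hf0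
  haveI : Module.Finite F K := Module.Finite.of_basis pb.basis
  haveI : Finite K := Module.finite_of_finite F
  haveI : Fintype K := Fintype.ofFinite K
  have hpbdim : pb.dim = k := rfl
  have hcardK : Fintype.card K = Fintype.card F ^ k := by
    rw [Module.card_fintype pb.basis, Fintype.card_fin, hpbdim]
  have hq2 : 2 ≤ Fintype.card F := Fintype.one_lt_card
  -- characteristic plumbing
  set p := ringChar F with hpdef
  haveI hpF : CharP F p := ringChar.charP F
  haveI hp : Fact p.Prime := ⟨CharP.char_is_prime F p⟩
  haveI : CharP K p := charP_of_injective_ringHom (algebraMap F K).injective p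
  haveI : ExpChar K p := ExpChar.prime hp.out
  obtain ⟨n, -, hn⟩ := FiniteField.card F p
  -- Frobenius powers as F-algebra homs
  have hfix : ∀ (j : ℕ) (u : F), algebraMap F K u ^ p ^ ((n : ℕ) * j) = algebraMap F K u := by
    intro j u
    rw [← map_pow]
    congr 1
    rw [pow_mul, ← hn]
    exact FiniteField.pow_card_pow _ _
  let frob : ℕ → (K →ₐ[F] K) := fun j =>
    { toRingHom := iterateFrobenius K p ((n : ℕ) * j)
      commutes' := fun u => by
        simpa [iterateFrobenius_def] using hfix j u }
  have frob_apply : ∀ (j : ℕ) (y : K), frob j y = y ^ (Fintype.card F) ^ j := by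
    intro j y
    show iterateFrobenius K p ((n : ℕ) * j) y = _
    rw [iterateFrobenius_def, hn, ← pow_mul]
  -- injectivity of j ↦ frob j on Fin k
  obtain ⟨g, hg⟩ := IsCyclic.exists_generator (α := Kˣ)
  have hord : orderOf g = Fintype.card K - 1 := by
    rw [orderOf_eq_card_of_forall_mem_zpowers hg, Nat.card_eq_fintype_card,
      Fintype.card_units]
  have hbound : ∀ m : Fin k, Fintype.card F ^ (m : ℕ) < Fintype.card K - 1 := by
    intro m
    have hm1 : Fintype.card F ^ (m : ℕ) ≤ Fintype.card F ^ (k - 1) :=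
      Nat.pow_le_pow_right (by omega) (by omega)
    have hm3 : Fintype.card F ^ (k - 1) * Fintype.card F = Fintype.card F ^ k := by
      rw [← pow_succ]
      congr 1
      omega
    have hm5 : Fintype.card F ^ (k - 1) * 2 ≤ Fintype.card F ^ k := by
      rw [← hm3]
      exact Nat.mul_le_mul_left _ hq2
    have hm6 : Fintype.card F ≤ Fintype.card F ^ (k - 1) :=
      Nat.le_self_pow (by omega) _
    rw [hcardK]
    omega
  have hinj : Function.Injective (fun j : Fin k => frob (j : ℕ)) := by
    intro i j hij
    have h1 : (g : K) ^ (Fintype.card F) ^ (i : ℕ) = (g : K) ^ (Fintype.card F) ^ (j : ℕ) := by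
      have := congrArg (fun φ : K →ₐ[F] K => φ (g : K)) hij
      simpa [frob_apply] using this
    have h2 : g ^ (Fintype.card F) ^ (i : ℕ) = g ^ (Fintype.card F) ^ (j : ℕ) :=
      Units.ext (by simpa using h1)
    rw [pow_inj_mod, hord, Nat.mod_eq_of_lt (hbound i), Nat.mod_eq_of_lt (hbound j)] at h2
    exact Fin.ext (Nat.pow_right_injective hq2 h2)
  -- counting algebra homs
  have hhominj : Function.Injective (fun (χ : K →ₐ[F] K) => χ (AdjoinRoot.root f)) :=
    fun χ₁ χ₂ h => AdjoinRoot.algHom_ext h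
  haveI : Finite (K →ₐ[F] K) := Finite.of_injective _ hhominj
  haveI : Fintype (K →ₐ[F] K) := Fintype.ofFinite _
  have hmapne : f.map (algebraMap F K) ≠ 0 :=
    Polynomial.map_ne_zero hf0
  have hmemroots : ∀ χ : K →ₐ[F] K,
      χ (AdjoinRoot.root f) ∈ (f.map (algebraMap F K)).roots.toFinset := by
    intro χ
    rw [Multiset.mem_toFinset, Polynomial.mem_roots hmapne, Polynomial.IsRoot,
      Polynomial.eval_map, ← aeval_def, Polynomial.aeval_algHom_apply, aeval_root']
    exact map_zero χ
  have hcardHom : Fintype.card (K →ₐ[F] K) ≤ k := by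
    have hinj2 : Function.Injective
        (fun (χ : K →ₐ[F] K) =>
          (⟨χ (AdjoinRoot.root f), hmemroots χ⟩ :
            {y // y ∈ (f.map (algebraMap F K)).roots.toFinset})) := by
      intro χ₁ χ₂ h
      exact hhominj (congrArg Subtype.val h)
    have := Fintype.card_le_of_injective _ hinj2
    rw [Fintype.card_coe] at this
    refine le_trans this (le_trans (Multiset.toFinset_card_le _) ?_)
    refine le_trans (Polynomial.card_roots' _) ?_
    rw [Polynomial.natDegree_map]
  have hbij : Function.Bijective (fun j : Fin k => frob (j : ℕ)) := by
    rw [Fintype.bijective_iff_injective_and_card]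
    refine ⟨hinj, le_antisymm (Fintype.card_le_of_injective _ hinj) ?_⟩
    rw [Fintype.card_fin]
    exact hcardHom
  obtain ⟨i, hi⟩ := hbij.2 φ
  obtain ⟨j, hj⟩ := hbij.2 ψ
  rw [← hi, ← hj, frob_apply, frob_apply, frob_apply, frob_apply, ← pow_mul, ← pow_mul,
    mul_comm]

end SigmaAux
namespace SigmaAux
open PGLAct
variable {F : Type} [Field F]

lemma sigma_eq_of_fixed [Fintype F] (A A0 : GL (Fin 2) F)
    (f : F[X]) (hmon : f.Monic) (hirr : Irreducible f) (hdeg : 3 ≤ f.natDegree)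
    (hA : pcirc A.val f = f) (hA0 : pcirc A0.val f = f) :
    ∃ ε : F, (ε = 1 ∨ ε = -1) ∧
      sigmaProd A.val A0.val = (ε * A0.val.det) • A.val := by
  classical
  haveI : Fact (Irreducible f) := ⟨hirr⟩
  set α := AdjoinRoot.root f with hα_def
  have hα : aeval α f = 0 := aeval_root' f
  have hdetA : A.val.det ≠ 0 :=
    ((Matrix.isUnit_iff_isUnit_det _).mp A.isUnit).ne_zero
  have hdetA0 : A0.val.det ≠ 0 :=
    ((Matrix.isUnit_iff_isUnit_det _).mp A0.isUnit).ne_zero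
  have hsne : ∀ (M : GL (Fin 2) F) (x : AdjoinRoot f), aeval x f = 0 →
      algebraMap F (AdjoinRoot f) (M.val 0 1) * x + algebraMap F (AdjoinRoot f) (M.val 1 1) ≠ 0 := by
    intro M x hx hzero
    obtain ⟨hb, hd⟩ := lin_vanish hirr hmon hdeg hx _ _ hzero
    have hdet : M.val.det = 0 := by
      rw [Matrix.det_fin_two, hb, hd]
      ring
    have hu : IsUnit M.val.det := (Matrix.isUnit_iff_isUnit_det _).mp M.isUnit
    rw [hdet] at hu
    exact hu.ne_zero rfl
  have hroot : ∀ (M : GL (Fin 2) F), pcirc M.val f = f →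
      aeval ((algebraMap F (AdjoinRoot f) (M.val 0 0) * α + algebraMap F (AdjoinRoot f) (M.val 1 0)) /
        (algebraMap F (AdjoinRoot f) (M.val 0 1) * α + algebraMap F (AdjoinRoot f) (M.val 1 1))) f = 0 := by
    intro M hM
    have hs := hsne M α hα
    have hm0 : mcirc M.val f ≠ 0 := by
      intro h0
      rw [pcirc, h0, mul_zero] at hM
      exact hmon.ne_zero hM.symm
    have hl : (mcirc M.val f).leadingCoeff ≠ 0 := leadingCoeff_ne_zero.mpr hm0
    have h1 : aeval α (pcirc M.val f) = 0 := by
      rw [hM]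
      exact hα
    rw [pcirc, map_mul, aeval_C] at h1
    rcases mul_eq_zero.mp h1 with h | h
    · rw [_root_.map_eq_zero] at h
      exact absurd h (inv_ne_zero hl)
    · rw [aeval_mcirc (AdjoinRoot f) M.val f α hs] at h
      rcases mul_eq_zero.mp h with h' | h'
      · exact absurd h' (pow_ne_zero _ hs)
      · exact h'
  have hs1 : (algebraMap F (AdjoinRoot f) (A.val 0 1) * α + algebraMap F (AdjoinRoot f) (A.val 1 1)) ≠ 0 := hsne A α hα
  have hs2 : (algebraMap F (AdjoinRoot f) (A0.val 0 1) * α + algebraMap F (AdjoinRoot f) (A0.val 1 1)) ≠ 0 := hsne A0 α hα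
  have hβ : aeval ((algebraMap F (AdjoinRoot f) (A.val 0 0) * α + algebraMap F (AdjoinRoot f) (A.val 1 0)) / (algebraMap F (AdjoinRoot f) (A.val 0 1) * α + algebraMap F (AdjoinRoot f) (A.val 1 1))) f = 0 := hroot A hA
  have hγ : aeval ((algebraMap F (AdjoinRoot f) (A0.val 0 0) * α + algebraMap F (AdjoinRoot f) (A0.val 1 0)) / (algebraMap F (AdjoinRoot f) (A0.val 0 1) * α + algebraMap F (AdjoinRoot f) (A0.val 1 1))) f = 0 := hroot A0 hA0
  have hs2β : algebraMap F (AdjoinRoot f) (A0.val 0 1) * ((algebraMap F (AdjoinRoot f) (A.val 0 0) * α + algebraMap F (AdjoinRoot f) (A.val 1 0)) / (algebraMap F (AdjoinRoot f) (A.val 0 1) * α + algebraMap F (AdjoinRoot f) (A.val 1 1))) + algebraMap F (AdjoinRoot f) (A0.val 1 1) ≠ 0 := hsne A0 _ hβ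
  have hs1γ : algebraMap F (AdjoinRoot f) (A.val 0 1) * ((algebraMap F (AdjoinRoot f) (A0.val 0 0) * α + algebraMap F (AdjoinRoot f) (A0.val 1 0)) / (algebraMap F (AdjoinRoot f) (A0.val 0 1) * α + algebraMap F (AdjoinRoot f) (A0.val 1 1))) + algebraMap F (AdjoinRoot f) (A.val 1 1) ≠ 0 := hsne A _ hγ
  let φ : AdjoinRoot f →ₐ[F] AdjoinRoot f := AdjoinRoot.liftAlgHom f (Algebra.ofId F (AdjoinRoot f)) ((algebraMap F (AdjoinRoot f) (A.val 0 0) * α + algebraMap F (AdjoinRoot f) (A.val 1 0)) / (algebraMap F (AdjoinRoot f) (A.val 0 1) * α + algebraMap F (AdjoinRoot f) (A.val 1 1))) hβ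
  let ψ : AdjoinRoot f →ₐ[F] AdjoinRoot f := AdjoinRoot.liftAlgHom f (Algebra.ofId F (AdjoinRoot f)) ((algebraMap F (AdjoinRoot f) (A0.val 0 0) * α + algebraMap F (AdjoinRoot f) (A0.val 1 0)) / (algebraMap F (AdjoinRoot f) (A0.val 0 1) * α + algebraMap F (AdjoinRoot f) (A0.val 1 1))) hγ
  have hφα : φ α = ((algebraMap F (AdjoinRoot f) (A.val 0 0) * α + algebraMap F (AdjoinRoot f) (A.val 1 0)) / (algebraMap F (AdjoinRoot f) (A.val 0 1) * α + algebraMap F (AdjoinRoot f) (A.val 1 1))) := AdjoinRoot.liftAlgHom_root f _ _ hβ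
  have hψα : ψ α = ((algebraMap F (AdjoinRoot f) (A0.val 0 0) * α + algebraMap F (AdjoinRoot f) (A0.val 1 0)) / (algebraMap F (AdjoinRoot f) (A0.val 0 1) * α + algebraMap F (AdjoinRoot f) (A0.val 1 1))) := AdjoinRoot.liftAlgHom_root f _ _ hγ
  have hcomm := algHom_comm f hmon hdeg φ ψ α
  rw [hψα, hφα] at hcomm
  have hφγ : φ ((algebraMap F (AdjoinRoot f) (A0.val 0 0) * α + algebraMap F (AdjoinRoot f) (A0.val 1 0)) / (algebraMap F (AdjoinRoot f) (A0.val 0 1) * α + algebraMap F (AdjoinRoot f) (A0.val 1 1))) =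
      (algebraMap F (AdjoinRoot f) (A0.val 0 0) * ((algebraMap F (AdjoinRoot f) (A.val 0 0) * α + algebraMap F (AdjoinRoot f) (A.val 1 0)) / (algebraMap F (AdjoinRoot f) (A.val 0 1) * α + algebraMap F (AdjoinRoot f) (A.val 1 1))) + algebraMap F (AdjoinRoot f) (A0.val 1 0)) /
        (algebraMap F (AdjoinRoot f) (A0.val 0 1) * ((algebraMap F (AdjoinRoot f) (A.val 0 0) * α + algebraMap F (AdjoinRoot f) (A.val 1 0)) / (algebraMap F (AdjoinRoot f) (A.val 0 1) * α + algebraMap F (AdjoinRoot f) (A.val 1 1))) + algebraMap F (AdjoinRoot f) (A0.val 1 1)) := by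
    rw [map_div₀, map_add, map_mul, map_add, map_mul, AlgHom.commutes, AlgHom.commutes,
      AlgHom.commutes, AlgHom.commutes, hφα]
  have hψβ : ψ ((algebraMap F (AdjoinRoot f) (A.val 0 0) * α + algebraMap F (AdjoinRoot f) (A.val 1 0)) / (algebraMap F (AdjoinRoot f) (A.val 0 1) * α + algebraMap F (AdjoinRoot f) (A.val 1 1))) =
      (algebraMap F (AdjoinRoot f) (A.val 0 0) * ((algebraMap F (AdjoinRoot f) (A0.val 0 0) * α + algebraMap F (AdjoinRoot f) (A0.val 1 0)) / (algebraMap F (AdjoinRoot f) (A0.val 0 1) * α + algebraMap F (AdjoinRoot f) (A0.val 1 1))) + algebraMap F (AdjoinRoot f) (A.val 1 0)) /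
        (algebraMap F (AdjoinRoot f) (A.val 0 1) * ((algebraMap F (AdjoinRoot f) (A0.val 0 0) * α + algebraMap F (AdjoinRoot f) (A0.val 1 0)) / (algebraMap F (AdjoinRoot f) (A0.val 0 1) * α + algebraMap F (AdjoinRoot f) (A0.val 1 1))) + algebraMap F (AdjoinRoot f) (A.val 1 1)) := by
    rw [map_div₀, map_add, map_mul, map_add, map_mul, AlgHom.commutes, AlgHom.commutes,
      AlgHom.commutes, AlgHom.commutes, hψα]
  rw [hφγ, hψβ] at hcomm
  have E1 := (div_eq_div_iff hs2β hs1γ).mp hcomm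
  have hβs : ((algebraMap F (AdjoinRoot f) (A.val 0 0) * α + algebraMap F (AdjoinRoot f) (A.val 1 0)) / (algebraMap F (AdjoinRoot f) (A.val 0 1) * α + algebraMap F (AdjoinRoot f) (A.val 1 1))) * (algebraMap F (AdjoinRoot f) (A.val 0 1) * α + algebraMap F (AdjoinRoot f) (A.val 1 1)) = (algebraMap F (AdjoinRoot f) (A.val 0 0) * α + algebraMap F (AdjoinRoot f) (A.val 1 0)) := div_mul_cancel₀ _ hs1
  have hγs : ((algebraMap F (AdjoinRoot f) (A0.val 0 0) * α + algebraMap F (AdjoinRoot f) (A0.val 1 0)) / (algebraMap F (AdjoinRoot f) (A0.val 0 1) * α + algebraMap F (AdjoinRoot f) (A0.val 1 1))) * (algebraMap F (AdjoinRoot f) (A0.val 0 1) * α + algebraMap F (AdjoinRoot f) (A0.val 1 1)) = (algebraMap F (AdjoinRoot f) (A0.val 0 0) * α + algebraMap F (AdjoinRoot f) (A0.val 1 0)) := div_mul_cancel₀ _ hs2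
  have hL1 : (algebraMap F (AdjoinRoot f) (A0.val 0 0) * ((algebraMap F (AdjoinRoot f) (A.val 0 0) * α + algebraMap F (AdjoinRoot f) (A.val 1 0)) / (algebraMap F (AdjoinRoot f) (A.val 0 1) * α + algebraMap F (AdjoinRoot f) (A.val 1 1))) + algebraMap F (AdjoinRoot f) (A0.val 1 0)) * (algebraMap F (AdjoinRoot f) (A.val 0 1) * α + algebraMap F (AdjoinRoot f) (A.val 1 1))
      = algebraMap F (AdjoinRoot f) (A0.val 0 0) * (algebraMap F (AdjoinRoot f) (A.val 0 0) * α + algebraMap F (AdjoinRoot f) (A.val 1 0)) + algebraMap F (AdjoinRoot f) (A0.val 1 0) * (algebraMap F (AdjoinRoot f) (A.val 0 1) * α + algebraMap F (AdjoinRoot f) (A.val 1 1)) := by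
    rw [add_mul, mul_assoc, hβs]
  have hL2 : (algebraMap F (AdjoinRoot f) (A.val 0 1) * ((algebraMap F (AdjoinRoot f) (A0.val 0 0) * α + algebraMap F (AdjoinRoot f) (A0.val 1 0)) / (algebraMap F (AdjoinRoot f) (A0.val 0 1) * α + algebraMap F (AdjoinRoot f) (A0.val 1 1))) + algebraMap F (AdjoinRoot f) (A.val 1 1)) * (algebraMap F (AdjoinRoot f) (A0.val 0 1) * α + algebraMap F (AdjoinRoot f) (A0.val 1 1))
      = algebraMap F (AdjoinRoot f) (A.val 0 1) * (algebraMap F (AdjoinRoot f) (A0.val 0 0) * α + algebraMap F (AdjoinRoot f) (A0.val 1 0)) + algebraMap F (AdjoinRoot f) (A.val 1 1) * (algebraMap F (AdjoinRoot f) (A0.val 0 1) * α + algebraMap F (AdjoinRoot f) (A0.val 1 1)) := by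
    rw [add_mul, mul_assoc, hγs]
  have hR1 : (algebraMap F (AdjoinRoot f) (A.val 0 0) * ((algebraMap F (AdjoinRoot f) (A0.val 0 0) * α + algebraMap F (AdjoinRoot f) (A0.val 1 0)) / (algebraMap F (AdjoinRoot f) (A0.val 0 1) * α + algebraMap F (AdjoinRoot f) (A0.val 1 1))) + algebraMap F (AdjoinRoot f) (A.val 1 0)) * (algebraMap F (AdjoinRoot f) (A0.val 0 1) * α + algebraMap F (AdjoinRoot f) (A0.val 1 1))
      = algebraMap F (AdjoinRoot f) (A.val 0 0) * (algebraMap F (AdjoinRoot f) (A0.val 0 0) * α + algebraMap F (AdjoinRoot f) (A0.val 1 0)) + algebraMap F (AdjoinRoot f) (A.val 1 0) * (algebraMap F (AdjoinRoot f) (A0.val 0 1) * α + algebraMap F (AdjoinRoot f) (A0.val 1 1)) := by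
    rw [add_mul, mul_assoc, hγs]
  have hR2 : (algebraMap F (AdjoinRoot f) (A0.val 0 1) * ((algebraMap F (AdjoinRoot f) (A.val 0 0) * α + algebraMap F (AdjoinRoot f) (A.val 1 0)) / (algebraMap F (AdjoinRoot f) (A.val 0 1) * α + algebraMap F (AdjoinRoot f) (A.val 1 1))) + algebraMap F (AdjoinRoot f) (A0.val 1 1)) * (algebraMap F (AdjoinRoot f) (A.val 0 1) * α + algebraMap F (AdjoinRoot f) (A.val 1 1))
      = algebraMap F (AdjoinRoot f) (A0.val 0 1) * (algebraMap F (AdjoinRoot f) (A.val 0 0) * α + algebraMap F (AdjoinRoot f) (A.val 1 0)) + algebraMap F (AdjoinRoot f) (A0.val 1 1) * (algebraMap F (AdjoinRoot f) (A.val 0 1) * α + algebraMap F (AdjoinRoot f) (A.val 1 1)) := by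
    rw [add_mul, mul_assoc, hβs]
  have E2 : (algebraMap F (AdjoinRoot f) (A0.val 0 0) * (algebraMap F (AdjoinRoot f) (A.val 0 0) * α + algebraMap F (AdjoinRoot f) (A.val 1 0)) + algebraMap F (AdjoinRoot f) (A0.val 1 0) * (algebraMap F (AdjoinRoot f) (A.val 0 1) * α + algebraMap F (AdjoinRoot f) (A.val 1 1))) * (algebraMap F (AdjoinRoot f) (A.val 0 1) * (algebraMap F (AdjoinRoot f) (A0.val 0 0) * α + algebraMap F (AdjoinRoot f) (A0.val 1 0)) + algebraMap F (AdjoinRoot f) (A.val 1 1) * (algebraMap F (AdjoinRoot f) (A0.val 0 1) * α + algebraMap F (AdjoinRoot f) (A0.val 1 1))) = (algebraMap F (AdjoinRoot f) (A.val 0 0) * (algebraMap F (AdjoinRoot f) (A0.val 0 0) * α + algebraMap F (AdjoinRoot f) (A0.val 1 0)) + algebraMap F (AdjoinRoot f) (A.val 1 0) * (algebraMap F (AdjoinRoot f) (A0.val 0 1) * α + algebraMap F (AdjoinRoot f) (A0.val 1 1))) * (algebraMap F (AdjoinRoot f) (A0.val 0 1) * (algebraMap F (AdjoinRoot f) (A.val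 0 0) * α + algebraMap F (AdjoinRoot f) (A.val 1 0)) + algebraMap F (AdjoinRoot f) (A0.val 1 1) * (algebraMap F (AdjoinRoot f) (A.val 0 1) * α + algebraMap F (AdjoinRoot f) (A.val 1 1))) := by
    calc (algebraMap F (AdjoinRoot f) (A0.val 0 0) * (algebraMap F (AdjoinRoot f) (A.val 0 0) * α + algebraMap F (AdjoinRoot f) (A.val 1 0)) + algebraMap F (AdjoinRoot f) (A0.val 1 0) * (algebraMap F (AdjoinRoot f) (A.val 0 1) * α + algebraMap F (AdjoinRoot f) (A.val 1 1))) * (algebraMap F (AdjoinRoot f) (A.val 0 1) * (algebraMap F (AdjoinRoot f) (A0.val 0 0) * α + algebraMap F (AdjoinRoot f) (A0.val 1 0)) + algebraMap F (AdjoinRoot f) (A.val 1 1) * (algebraMap F (AdjoinRoot f) (A0.val 0 1) * α + algebraMap F (AdjoinRoot f) (A0.val 1 1)))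
        = ((algebraMap F (AdjoinRoot f) (A0.val 0 0) * ((algebraMap F (AdjoinRoot f) (A.val 0 0) * α + algebraMap F (AdjoinRoot f) (A.val 1 0)) / (algebraMap F (AdjoinRoot f) (A.val 0 1) * α + algebraMap F (AdjoinRoot f) (A.val 1 1))) + algebraMap F (AdjoinRoot f) (A0.val 1 0)) * (algebraMap F (AdjoinRoot f) (A.val 0 1) * α + algebraMap F (AdjoinRoot f) (A.val 1 1))) *
            ((algebraMap F (AdjoinRoot f) (A.val 0 1) * ((algebraMap F (AdjoinRoot f) (A0.val 0 0) * α + algebraMap F (AdjoinRoot f) (A0.val 1 0)) / (algebraMap F (AdjoinRoot f) (A0.val 0 1) * α + algebraMap F (AdjoinRoot f) (A0.val 1 1))) + algebraMap F (AdjoinRoot f) (A.val 1 1)) * (algebraMap F (AdjoinRoot f) (A0.val 0 1) * α + algebraMap F (AdjoinRoot f) (A0.val 1 1))) := by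
          rw [hL1, hL2]
      _ = ((algebraMap F (AdjoinRoot f) (A0.val 0 0) * ((algebraMap F (AdjoinRoot f) (A.val 0 0) * α + algebraMap F (AdjoinRoot f) (A.val 1 0)) / (algebraMap F (AdjoinRoot f) (A.val 0 1) * α + algebraMap F (AdjoinRoot f) (A.val 1 1))) + algebraMap F (AdjoinRoot f) (A0.val 1 0)) *
            (algebraMap F (AdjoinRoot f) (A.val 0 1) * ((algebraMap F (AdjoinRoot f) (A0.val 0 0) * α + algebraMap F (AdjoinRoot f) (A0.val 1 0)) / (algebraMap F (AdjoinRoot f) (A0.val 0 1) * α + algebraMap F (AdjoinRoot f) (A0.val 1 1))) + algebraMap F (AdjoinRoot f) (A.val 1 1))) * ((algebraMap F (AdjoinRoot f) (A.val 0 1) * α + algebraMap F (AdjoinRoot f) (A.val 1 1)) * (algebraMap F (AdjoinRoot f) (A0.val 0 1) * α + algebraMap F (AdjoinRoot f) (A0.val 1 1))) := by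
          ring
      _ = ((algebraMap F (AdjoinRoot f) (A.val 0 0) * ((algebraMap F (AdjoinRoot f) (A0.val 0 0) * α + algebraMap F (AdjoinRoot f) (A0.val 1 0)) / (algebraMap F (AdjoinRoot f) (A0.val 0 1) * α + algebraMap F (AdjoinRoot f) (A0.val 1 1))) + algebraMap F (AdjoinRoot f) (A.val 1 0)) *
            (algebraMap F (AdjoinRoot f) (A0.val 0 1) * ((algebraMap F (AdjoinRoot f) (A.val 0 0) * α + algebraMap F (AdjoinRoot f) (A.val 1 0)) / (algebraMap F (AdjoinRoot f) (A.val 0 1) * α + algebraMap F (AdjoinRoot f) (A.val 1 1))) + algebraMap F (AdjoinRoot f) (A0.val 1 1))) * ((algebraMap F (AdjoinRoot f) (A.val 0 1) * α + algebraMap F (AdjoinRoot f) (A.val 1 1)) * (algebraMap F (AdjoinRoot f) (A0.val 0 1) * α + algebraMap F (AdjoinRoot f) (A0.val 1 1))) := by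
          rw [E1]
      _ = ((algebraMap F (AdjoinRoot f) (A.val 0 0) * ((algebraMap F (AdjoinRoot f) (A0.val 0 0) * α + algebraMap F (AdjoinRoot f) (A0.val 1 0)) / (algebraMap F (AdjoinRoot f) (A0.val 0 1) * α + algebraMap F (AdjoinRoot f) (A0.val 1 1))) + algebraMap F (AdjoinRoot f) (A.val 1 0)) * (algebraMap F (AdjoinRoot f) (A0.val 0 1) * α + algebraMap F (AdjoinRoot f) (A0.val 1 1))) *
            ((algebraMap F (AdjoinRoot f) (A0.val 0 1) * ((algebraMap F (AdjoinRoot f) (A.val 0 0) * α + algebraMap F (AdjoinRoot f) (A.val 1 0)) / (algebraMap F (AdjoinRoot f) (A.val 0 1) * α + algebraMap F (AdjoinRoot f) (A.val 1 1))) + algebraMap F (AdjoinRoot f) (A0.val 1 1)) * (algebraMap F (AdjoinRoot f) (A.val 0 1) * α + algebraMap F (AdjoinRoot f) (A.val 1 1))) := by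
          ring
      _ = (algebraMap F (AdjoinRoot f) (A.val 0 0) * (algebraMap F (AdjoinRoot f) (A0.val 0 0) * α + algebraMap F (AdjoinRoot f) (A0.val 1 0)) + algebraMap F (AdjoinRoot f) (A.val 1 0) * (algebraMap F (AdjoinRoot f) (A0.val 0 1) * α + algebraMap F (AdjoinRoot f) (A0.val 1 1))) * (algebraMap F (AdjoinRoot f) (A0.val 0 1) * (algebraMap F (AdjoinRoot f) (A.val 0 0) * α + algebraMap F (AdjoinRoot f) (A.val 1 0)) + algebraMap F (AdjoinRoot f) (A0.val 1 1) * (algebraMap F (AdjoinRoot f) (A.val 0 1) * α + algebraMap F (AdjoinRoot f) (A.val 1 1))) := by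
          rw [hR1, hR2]
  have hK2 : algebraMap F (AdjoinRoot f) ((A0.val 0 0 * A.val 0 0 + A0.val 1 0 * A.val 0 1) * (A.val 0 1 * A0.val 0 0 + A.val 1 1 * A0.val 0 1) - (A.val 0 0 * A0.val 0 0 + A.val 1 0 * A0.val 0 1) * (A0.val 0 1 * A.val 0 0 + A0.val 1 1 * A.val 0 1)) * α ^ 2 + algebraMap F (AdjoinRoot f) ((A0.val 0 0 * A.val 0 0 + A0.val 1 0 * A.val 0 1) * (A.val 0 1 * A0.val 1 0 + A.val 1 1 * A0.val 1 1) + (A0.val 0 0 * A.val 1 0 + A0.val 1 0 * A.val 1 1) * (A.val 0 1 * A0.val 0 0 + A.val 1 1 * A0.val 0 1) - (A.val 0 0 * A0.val 0 0 + A.val 1 0 * A0.val 0 1) * (A0.val 0 1 * A.val 1 0 + A0.val 1 1 * A.val 1 1) - (A.val 0 0 * A0.val 1 0 + A.val 1 0 * A0.val 1 1) * (A0.val 0 1 * A.val 0 0 + A0.val 1 1 * A.val 0 1)) * α + algebraMap F (AdjoinRoot f) ((A0.val 0 0 * A.val 1 0 + A0.val 1 0 * A.val 1 1) * (A.val 0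 1 * A0.val 1 0 + A.val 1 1 * A0.val 1 1) - (A.val 0 0 * A0.val 1 0 + A.val 1 0 * A0.val 1 1) * (A0.val 0 1 * A.val 1 0 + A0.val 1 1 * A.val 1 1)) = 0 := by
    simp only [map_add, map_sub, map_mul]
    linear_combination E2
  obtain ⟨he2, he1, he0⟩ := quad_vanish hirr hmon hdeg hα _ _ _ hK2
  clear hcomm E1 E2 hβs hγs hL1 hL2 hR1 hR2 hK2 hφγ hψβ hφα hψα hs2β hs1γ
  set a1 := A.val 0 0 with ha1
  set b1 := A.val 0 1 with hb1
  set c1 := A.val 1 0 with hc1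
  set d1 := A.val 1 1 with hd1
  set a2 := A0.val 0 0 with ha2
  set b2 := A0.val 0 1 with hb2
  set c2 := A0.val 1 0 with hc2
  set d2 := A0.val 1 1 with hd2
  have hdA : A.val.det = a1 * d1 - b1 * c1 := by
    rw [Matrix.det_fin_two, ← ha1, ← hb1, ← hc1, ← hd1]
  have hdA0 : A0.val.det = (a2 * d2 - b2 * c2) := by
    rw [Matrix.det_fin_two, ← ha2, ← hb2, ← hc2, ← hd2]
  rw [hdA] at hdetA
  rw [hdA0] at hdetA0
  have hDne : (a1 * d1 - b1 * c1) * (a2 * d2 - b2 * c2) ≠ 0 := mul_ne_zero hdetA hdetA0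
  have hdetN : (a1 * a2 + c1 * b2) * (b1 * c2 + d1 * d2) - (a1 * c2 + c1 * d2) * (b1 * a2 + d1 * b2) = (a1 * d1 - b1 * c1) * (a2 * d2 - b2 * c2) := by
    ring
  have key : ∃ ε : F,
      (a2 * a1 + c2 * b1) = ε * (a1 * a2 + c1 * b2) ∧ (a2 * c1 + c2 * d1) = ε * (a1 * c2 + c1 * d2) ∧ (b2 * a1 + d2 * b1) = ε * (b1 * a2 + d1 * b2) ∧ (b2 * c1 + d2 * d1) = ε * (b1 * c2 + d1 * d2) := by
    by_cases hP1z : (a1 * a2 + c1 * b2) = 0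
    · have hP1pR : (a1 * c2 + c1 * d2) * (b1 * a2 + d1 * b2) ≠ 0 := by
        intro h0
        exact hDne (by rw [← hdetN, hP1z, h0]; ring)
      have hP1p : (a1 * c2 + c1 * d2) ≠ 0 := fun h => hP1pR (by rw [h, zero_mul])
      have hR : (b1 * a2 + d1 * b2) ≠ 0 := fun h => hP1pR (by rw [h, mul_zero])
      have hP : (a2 * a1 + c2 * b1) = 0 := by
        have h : (a2 * a1 + c2 * b1) * (b1 * a2 + d1 * b2) = 0 := by
          linear_combination he2 + (b2 * a1 + d2 * b1) * hP1z
        exact (mul_eq_zero.mp h).resolve_right hR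
      have h_a : (a2 * c1 + c2 * d1) * (b1 * a2 + d1 * b2) = (a1 * c2 + c1 * d2) * (b2 * a1 + d2 * b1) := by
        linear_combination he1 - (b1 * c2 + d1 * d2) * hP + (b2 * c1 + d2 * d1) * hP1z
      refine ⟨(b2 * a1 + d2 * b1) / (b1 * a2 + d1 * b2), ?_, ?_, (div_mul_cancel₀ _ hR).symm, ?_⟩
      · rw [hP1z, mul_zero, hP]
      · rw [div_mul_eq_mul_div, eq_div_iff hR]
        linear_combination h_a
      · rw [div_mul_eq_mul_div, eq_div_iff hR]
        have h_b : (a1 * c2 + c1 * d2) * ((b2 * c1 + d2 * d1) * (b1 * a2 + d1 * b2)) = (a1 * c2 + c1 * d2) * ((b2 * a1 + d2 * b1) * (b1 * c2 + d1 * d2)) := by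
          linear_combination (b1 * c2 + d1 * d2) * h_a - (b1 * a2 + d1 * b2) * he0
        have := mul_left_cancel₀ hP1p h_b
        linear_combination this
    · have h1 : (a2 * a1 + c2 * b1) = (a2 * a1 + c2 * b1) / (a1 * a2 + c1 * b2) * (a1 * a2 + c1 * b2) := (div_mul_cancel₀ _ hP1z).symm
      have key2 : ((a2 * c1 + c2 * d1) * (a1 * a2 + c1 * b2) - (a1 * c2 + c1 * d2) * (a2 * a1 + c2 * b1)) * ((a1 * a2 + c1 * b2) * (b1 * c2 + d1 * d2) - (a1 * c2 + c1 * d2) * (b1 * a2 + d1 * b2)) = 0 := by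
        linear_combination (a1 * a2 + c1 * b2) ^ 2 * he0 + (a1 * c2 + c1 * d2) ^ 2 * he2 - (a1 * a2 + c1 * b2) * (a1 * c2 + c1 * d2) * he1
      have hprop : (a2 * c1 + c2 * d1) * (a1 * a2 + c1 * b2) - (a1 * c2 + c1 * d2) * (a2 * a1 + c2 * b1) = 0 := by
        rcases mul_eq_zero.mp key2 with h | h
        · exact h
        · exact absurd (by rw [← hdetN]; exact h) hDne
      refine ⟨(a2 * a1 + c2 * b1) / (a1 * a2 + c1 * b2), h1, ?_, ?_, ?_⟩
      · rw [div_mul_eq_mul_div, eq_div_iff hP1z]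
        linear_combination hprop
      · rw [div_mul_eq_mul_div, eq_div_iff hP1z]
        linear_combination -he2
      · rw [div_mul_eq_mul_div, eq_div_iff hP1z]
        have h_c : (a1 * a2 + c1 * b2) * ((b2 * c1 + d2 * d1) * (a1 * a2 + c1 * b2)) = (a1 * a2 + c1 * b2) * ((a2 * a1 + c2 * b1) * (b1 * c2 + d1 * d2)) := by
          linear_combination (-(a1 * a2 + c1 * b2)) * he1 + (b1 * a2 + d1 * b2) * hprop + (a1 * c2 + c1 * d2) * he2
        exact mul_left_cancel₀ hP1z h_c
  obtain ⟨ε, h1, h2, h3, h4⟩ := key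
  have hsq : (ε - 1) * (ε + 1) * ((a1 * d1 - b1 * c1) * (a2 * d2 - b2 * c2)) = 0 := by
    linear_combination (-(b2 * c1 + d2 * d1)) * h1 + (b2 * a1 + d2 * b1) * h2 + (ε * (a1 * c2 + c1 * d2)) * h3 + (-(ε * (a1 * a2 + c1 * b2))) * h4
  have hepm : ε = 1 ∨ ε = -1 := by
    rcases mul_eq_zero.mp hsq with h | h
    · rcases mul_eq_zero.mp h with h' | h'
      · exact Or.inl (by linear_combination h')
      · exact Or.inr (by linear_combination h')
    · exact absurd h hDne
  refine ⟨ε, hepm, ?_⟩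
  have hfour : (-(b1 * (a2 * c2) - a1 * (a2 * d2) + d1 * (c2 * b2) - c1 * (b2 * d2))) = ε * (a2 * d2 - b2 * c2) * a1 ∧ (b1 * a2 ^ 2 - a1 * (a2 * b2) + d1 * (a2 * b2) - c1 * b2 ^ 2) = ε * (a2 * d2 - b2 * c2) * b1 ∧
      (-(b1 * c2 ^ 2 - a1 * (c2 * d2) + d1 * (d2 * c2) - c1 * d2 ^ 2)) = ε * (a2 * d2 - b2 * c2) * c1 ∧ (b1 * (a2 * c2) - a1 * (c2 * b2) + d1 * (d2 * a2) - c1 * (b2 * d2)) = ε * (a2 * d2 - b2 * c2) * d1 := by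
    rcases hepm with h | h <;> rw [h] at h1 h2 h3 h4 ⊢
    · exact ⟨by linear_combination (-a2) * h1 + (-b2) * h2,
        by linear_combination b2 * h1 + (-a2) * h3,
        by linear_combination (-c2) * h1 + (-d2) * h2,
        by linear_combination a2 * h1 + b2 * h2⟩
    · exact ⟨by linear_combination d2 * h1 + (-c2) * h3,
        by linear_combination (-b2) * h1 + a2 * h3,
        by linear_combination d2 * h2 + (-c2) * h4,
        by linear_combination (-b2) * h2 + a2 * h4⟩
  rw [hdA0, ← Matrix.ext_iff]
  simp only [Fin.forall_fin_two, sigmaProd, Matrix.smul_apply, smul_eq_mul, Matrix.cons_val',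
    Matrix.cons_val_zero, Matrix.cons_val_one, Matrix.head_cons, Matrix.empty_val',
    Matrix.cons_val_fin_one, Matrix.head_fin_const, Matrix.of_apply, ← ha1, ← hb1, ← hc1, ← hd1,
    ← ha2, ← hb2, ← hc2, ← hd2]
  refine ⟨⟨?_, ?_⟩, ?_, ?_⟩
  · linear_combination hfour.1
  · linear_combination hfour.2.1
  · linear_combination hfour.2.2.1
  · linear_combination hfour.2.2.2

end SigmaAux

/-- Properties of the σ-product: its determinant is `det(A)·det(A₀)²` (so it
lies in `GL₂`), `A₀∘F_{A,r}` divides `F_{σ(A,A₀),r}`, and if a monic irreducible `f` of degree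
`≥ 3` is fixed by both `[A]` and `[A₀]` then `σ(A,A₀) = ε·det(A₀)·A` with `ε = ±1`. -/
theorem sigma_product_properties {F : Type} [Field F] [Fintype F] (A A0 : GL (Fin 2) F) :
    (PGLAct.sigmaProd A.val A0.val).det = A.val.det * A0.val.det ^ 2 ∧
    IsUnit (PGLAct.sigmaProd A.val A0.val).det ∧
    (∀ r : ℕ, PGLAct.mcirc A0.val (PGLAct.FAr A.val r) ∣
      PGLAct.FAr (PGLAct.sigmaProd A.val A0.val) r) ∧
    (∀ f : F[X], f.Monic → Irreducible f → 3 ≤ f.natDegree →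
      PGLAct.pcirc A.val f = f → PGLAct.pcirc A0.val f = f →
      ∃ ε : F, (ε = 1 ∨ ε = -1) ∧
        PGLAct.sigmaProd A.val A0.val = (ε * A0.val.det) • A.val) := by
  have hdet : (PGLAct.sigmaProd A.val A0.val).det = A.val.det * A0.val.det ^ 2 := by
    rw [PGLAct.sigmaProd, Matrix.det_fin_two_of, Matrix.det_fin_two (A.val),
      Matrix.det_fin_two (A0.val)]
    ring
  refine ⟨hdet, ?_, ?_, ?_⟩
  · rw [hdet]
    exact ((Matrix.isUnit_iff_isUnit_det _).mp A.isUnit).mul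
      (((Matrix.isUnit_iff_isUnit_det _).mp A0.isUnit).pow 2)
  · intro r
    exact SigmaAux.mcirc_dvd_FAr_sigma A.val A0.val r
  · intro f hmon hirr hdeg hA hA0
    exact SigmaAux.sigma_eq_of_fixed A A0 f hmon hirr hdeg hA hA0
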